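/- Let ξ_1, …, ξ_n be i.i.d. Bernoulli random variables with success probability μ = E(ξ_1). Then P((1/n)·∑_{i=1}^n ξ_i ≥ 1/2) ≤ 2·(e·μ)^{n·(1/2 − μ)²}. -/

import Mathlib

open MeasureTheory ProbabilityTheory

lemma key_ineq (m : ℝ) (hm0 : 0 < m) (hm1 : Real.exp 1 * m < 1) :
    2 * Real.log 2 + Real.log (1 - m) + Real.log m ≤ 2 * (1/2 - m)^2 * (1 + Real.log m) := by
  have he : (2.7182818283:ℝ) < Real.exp 1 := Real.exp_one_gt_d9
  have he2 : Real.exp 1 < 2.7182818286 := Real.exp_one_lt_d9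
  have hm2 : m < 1/2 := by nlinarith
  have hl : Real.log m ≤ Real.exp 1 * m - 2 := by
    have h := Real.log_le_sub_one_of_pos (mul_pos (Real.exp_pos 1) hm0)
    rw [Real.log_mul (Real.exp_ne_zero 1) (ne_of_gt hm0), Real.log_exp] at h
    linarith
  have hexp : Real.exp m ≤ 1 + m + m^2/2 + m^3 * 4 / 18 := by
    have h := Real.exp_bound' hm0.le (by linarith) (n := 3) (by norm_num)
    simp [Finset.sum_range_succ, Nat.factorial] at h
    nlinarith [h]
  have hq : Real.log (1-m) ≤ (1-m) * Real.exp m - 1 - m := by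
    have h := Real.log_le_sub_one_of_pos (mul_pos (by linarith : (0:ℝ) < 1 - m) (Real.exp_pos m))
    rw [Real.log_mul (by linarith) (Real.exp_ne_zero m), Real.log_exp] at h
    linarith
  have hq2 : Real.log (1-m) ≤ -m - m^2/2 - (5/18)*m^3 - (2/9)*m^4 := by
    nlinarith [mul_le_mul_of_nonneg_left hexp (by linarith : (0:ℝ) ≤ 1 - m)]
  have hlog2 : Real.log 2 < 0.6931471808 := Real.log_two_lt_d9
  have hprod : 0 ≤ (1/2 + 2*m - 2*m^2) * (Real.exp 1 * m - 2 - Real.log m) := by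
    apply mul_nonneg (by nlinarith) (by linarith)
  have hpoly : 0 ≤ (3/2 - 2*Real.log 2) + 3*m - Real.exp 1*m/2 + (-3/2 - 2*Real.exp 1)*m^2
      + (2*Real.exp 1 + 5/18)*m^3 + (2/9)*m^4 := by
    nlinarith [mul_nonneg hm0.le (sub_nonneg.2 hm1.le),
      mul_nonneg (mul_nonneg hm0.le hm0.le) (sub_nonneg.2 hm1.le), sq_nonneg (1 - Real.exp 1*m),
      mul_nonneg (mul_nonneg hm0.le hm0.le) hm0.le, sq_nonneg (m - 7/50),
      mul_nonneg (mul_nonneg hm0.le hm0.le) (sq_nonneg (m-1/3))]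
  nlinarith [hprod, hq2, hpoly]

/-- Kiefer's inequality: for i.i.d. Bernoulli random variables with success probability `m`,
`P((1/n)∑ ξ_i ≥ 1/2) ≤ 2 (e·m)^{n(1/2 − m)²}`. -/
theorem stmt6 {Ω : Type*} [MeasurableSpace Ω] (μ : Measure Ω) [IsProbabilityMeasure μ]
    (n : ℕ) (hn : 0 < n) (ξ : Fin n → Ω → ℝ) (hmeas : ∀ i, Measurable (ξ i))
    (h01 : ∀ i ω, ξ i ω = 0 ∨ ξ i ω = 1)
    (hindep : iIndepFun ξ μ)
    (hident : ∀ i j, Measure.map (ξ i) μ = Measure.map (ξ j) μ)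
    (m : ℝ) (hm : ∀ i, (μ {ω | ξ i ω = 1}).toReal = m) :
    (μ {ω | (1 / 2 : ℝ) ≤ (n : ℝ)⁻¹ * ∑ i, ξ i ω}).toReal ≤
      2 * (Real.exp 1 * m) ^ ((n : ℝ) * (1 / 2 - m) ^ 2) := by
  have hm0 : 0 ≤ m := (hm ⟨0, hn⟩) ▸ ENNReal.toReal_nonneg
  have hrpow0 : (0:ℝ) ≤ (Real.exp 1 * m) ^ ((n : ℝ) * (1 / 2 - m) ^ 2) :=
    Real.rpow_nonneg (by positivity) _
  by_cases hcase : 1 ≤ Real.exp 1 * m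
  · have h1 : (1:ℝ) ≤ (Real.exp 1 * m) ^ ((n : ℝ) * (1 / 2 - m) ^ 2) :=
      Real.one_le_rpow hcase (by positivity)
    have h2 : (μ {ω | (1 / 2 : ℝ) ≤ (n : ℝ)⁻¹ * ∑ i, ξ i ω}).toReal ≤ 1 := by
      refine ENNReal.toReal_le_of_le_ofReal zero_le_one ?_
      simpa using prob_le_one
    linarith
  push_neg at hcase
  rcases eq_or_lt_of_le hm0 with hme | hmpos
  · -- m = 0 : the event has measure 0
    have hzero : ∀ i, μ {ω | ξ i ω = 1} = 0 := by
      intro i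
      have h := hm i
      rw [← hme] at h
      rcases (ENNReal.toReal_eq_zero_iff _).mp h with h' | h'
      · exact h'
      · exact absurd h' (measure_ne_top μ _)
    have hsub : {ω | (1 / 2 : ℝ) ≤ (n : ℝ)⁻¹ * ∑ i, ξ i ω} ⊆ ⋃ i, {ω | ξ i ω = 1} := by
      intro ω hω
      by_contra h
      simp only [Set.mem_iUnion, Set.mem_setOf_eq, not_exists] at h
      have hz : ∀ i, ξ i ω = 0 := fun i => (h01 i ω).resolve_right (h i)
      have : (1/2 : ℝ) ≤ (n : ℝ)⁻¹ * ∑ i, ξ i ω := hω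
      rw [Finset.sum_congr rfl (fun i _ => hz i)] at this
      simp at this
      linarith
    have hE0 : μ {ω | (1 / 2 : ℝ) ≤ (n : ℝ)⁻¹ * ∑ i, ξ i ω} = 0 :=
      measure_mono_null hsub (measure_iUnion_null fun i => hzero i)
    rw [hE0]
    simp
    positivity
  -- main case : 0 < m, e·m < 1
  have he : (2.7182818283:ℝ) < Real.exp 1 := Real.exp_one_gt_d9
  have hm2 : m < 1/2 := by nlinarith
  have h1m : (0:ℝ) < 1 - m := by linarith
  set t := Real.log ((1-m)/m) with ht
  have htpos : 0 ≤ t := Real.log_nonneg (by rw [le_div_iff₀ hmpos]; linarith)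
  have hexp_t : Real.exp t = (1-m)/m := Real.exp_log (by positivity)
  have hAmeas : ∀ i, MeasurableSet {ω | ξ i ω = 1} := fun i =>
    hmeas i (measurableSet_singleton 1)
  have hfun : ∀ i, (fun ω => Real.exp (t * ξ i ω)) =
      (fun ω => 1 + (Real.exp t - 1) * Set.indicator {ω | ξ i ω = 1} (fun _ => (1:ℝ)) ω) := by
    intro i
    funext ω
    rcases h01 i ω with h | h <;> simp [Set.indicator_apply, h]
  have hint : ∀ i, Integrable (fun ω => Real.exp (t * ξ i ω)) μ := by
    intro i
    rw [hfun i]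
    exact (integrable_const 1).add (((integrable_const (1:ℝ)).indicator (hAmeas i)).const_mul _)
  have hmgf : ∀ i, mgf (ξ i) μ t = 2*(1-m) := by
    intro i
    rw [mgf, hfun i]
    rw [integral_add (integrable_const _)
      (((integrable_const (1:ℝ)).indicator (hAmeas i)).const_mul _), integral_const,
      integral_const_mul, integral_indicator_const (1:ℝ) (hAmeas i)]
    simp [measureReal_def, hm i, hexp_t]
    field_simp
    ring
  have hSint : Integrable (fun ω => Real.exp (t * (∑ i, ξ i) ω)) μ :=
    hindep.integrable_exp_mul_sum hmeas (fun i _ => hint i)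
  have hchern := measure_ge_le_exp_mul_mgf (μ := μ) (X := ∑ i, ξ i) ((n:ℝ)/2) htpos hSint
  have hmgfS : mgf (∑ i, ξ i) μ t = (2*(1-m))^n := by
    rw [hindep.mgf_sum hmeas]
    simp [hmgf]
  have hsets : {ω | (1 / 2 : ℝ) ≤ (n : ℝ)⁻¹ * ∑ i, ξ i ω} =
      {ω | (n:ℝ)/2 ≤ (∑ i, ξ i) ω} := by
    ext ω
    simp only [Set.mem_setOf_eq, Finset.sum_apply]
    rw [inv_mul_eq_div, le_div_iff₀ (by exact_mod_cast hn : (0:ℝ) < (n:ℝ))]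
    constructor <;> intro h <;> linarith
  have hmain : (μ {ω | (1 / 2 : ℝ) ≤ (n : ℝ)⁻¹ * ∑ i, ξ i ω}).toReal ≤
      (Real.exp 1 * m) ^ ((n : ℝ) * (1 / 2 - m) ^ 2) := by
    rw [hsets]
    refine hchern.trans ?_
    rw [hmgfS]
    have hbase : (0:ℝ) < 2*(1-m) := by linarith
    have hpow : (2*(1-m))^n = Real.exp ((n:ℝ) * Real.log (2*(1-m))) := by
      rw [← Real.exp_log hbase, ← Real.exp_nat_mul, Real.log_exp]
    rw [hpow, ← Real.exp_add, Real.rpow_def_of_pos (by positivity : (0:ℝ) < Real.exp 1 * m)]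
    apply Real.exp_le_exp.mpr
    have hlog1 : Real.log (2*(1-m)) = Real.log 2 + Real.log (1-m) :=
      Real.log_mul two_ne_zero (by linarith)
    have hlog2 : Real.log (Real.exp 1 * m) = 1 + Real.log m := by
      rw [Real.log_mul (Real.exp_ne_zero 1) hmpos.ne', Real.log_exp]
    have hlogt : t = Real.log (1-m) - Real.log m := by
      rw [ht, Real.log_div (by linarith) hmpos.ne']
    have key := key_ineq m hmpos hcase
    have hkey2 := mul_le_mul_of_nonneg_left key (by positivity : (0:ℝ) ≤ (n:ℝ)/2)
    rw [hlog1, hlog2, hlogt]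
    linear_combination hkey2
  linarith
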